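/- Let G be a finite simple graph. For each vertex x let t(x) denote the number of triangles of G all three of whose vertices are neighbors of x, and let p(x) denote the number of 3-element subsets of the neighborhood N(x) that span exactly two edges of G. Then ∑_{x∈V(G)} (3·t(x) + 2·p(x)) ≤ 4·c₄(G). -/

import Mathlib

open SimpleGraph

/-- The number of `k`-cycle subgraphs of `G`: each `k`-cycle subgraph corresponds to exactly
`2 * k` rooted closed walks that are cycles of length `k`. -/
noncomputable def cycleCount {V : Type*} (G : SimpleGraph V) (k : ℕ) : ℕ :=
  Nat.card ((x : V) × {p : G.Walk x x // p.IsCycle ∧ p.length = k}) / (2 * k)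

/-- The number of edges of `G` spanned by a finset `s` of vertices (i.e. with both
endpoints in `s`). -/
noncomputable def spannedEdges {V : Type*} (G : SimpleGraph V) (s : Finset V) : ℕ :=
  Nat.card {e : Sym2 V // e ∈ G.edgeSet ∧ ∀ v ∈ e, v ∈ s}

namespace C4CountAux

open DihedralGroup

section NoFintype
variable {V : Type*} {G : SimpleGraph V}


def IsQuad (G : SimpleGraph V) (q : V × V × V × V) : Prop :=
  G.Adj q.1 q.2.1 ∧ G.Adj q.2.1 q.2.2.1 ∧ G.Adj q.2.2.1 q.2.2.2 ∧ G.Adj q.2.2.2 q.1 ∧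
    q.1 ≠ q.2.2.1 ∧ q.2.1 ≠ q.2.2.2

theorem quadWalk_pf {a b c d : V} (h1 : G.Adj a b) (h2 : G.Adj b c) (h3 : G.Adj c d)
    (h4 : G.Adj d a) (h5 : a ≠ c) (h6 : b ≠ d) :
    (Walk.cons h1 (.cons h2 (.cons h3 (.cons h4 .nil)))).IsCycle ∧
    (Walk.cons h1 (.cons h2 (.cons h3 (.cons h4 .nil)))).length = 4 := by
  have n1 := h1.ne; have n2 := h2.ne; have n3 := h3.ne; have n4 := h4.ne
  refine ⟨?_, rfl⟩
  rw [Walk.isCycle_def]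
  refine ⟨⟨?_⟩, by simp, ?_⟩
  · simp [Sym2.eq_iff]
    aesop
  · simp
    aesop

def quadToWalk (q : V × V × V × V) (h : IsQuad G q) :
    (x : V) × {p : G.Walk x x // p.IsCycle ∧ p.length = 4} :=
  ⟨q.1, ⟨.cons h.1 (.cons h.2.1 (.cons h.2.2.1 (.cons h.2.2.2.1 .nil))),
    quadWalk_pf h.1 h.2.1 h.2.2.1 h.2.2.2.1 h.2.2.2.2.1 h.2.2.2.2.2⟩⟩

theorem quadToWalk_bijective :
    Function.Bijective (fun q : {q : V × V × V × V // IsQuad G q} => quadToWalk q.1 q.2) := by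
  constructor
  · intro q q' h
    have := congrArg (fun s : (x : V) × {p : G.Walk x x // p.IsCycle ∧ p.length = 4} =>
      (s.1, s.2.1.getVert 1, s.2.1.getVert 2, s.2.1.getVert 3)) h
    obtain ⟨⟨a,b,c,d⟩, hq⟩ := q
    obtain ⟨⟨a',b',c',d'⟩, hq'⟩ := q'
    simp [quadToWalk, Walk.getVert] at this
    exact Subtype.ext (by simp [this.1, this.2.1, this.2.2.1, this.2.2.2])
  · rintro ⟨x, p, hc, hl⟩
    cases p with
    | nil => simp at hl
    | cons h1 p =>
      cases p with
      | nil => simp at hl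
      | cons h2 p =>
        cases p with
        | nil => simp at hl
        | cons h3 p =>
          cases p with
          | nil => simp at hl
          | cons h4 p =>
            cases p with
            | cons h5 p => simp [Walk.length] at hl
            | nil =>
              rw [Walk.isCycle_def] at hc
              simp at hc
              refine ⟨⟨(_, _, _, _), h1, h2, h3, h4, ?_, ?_⟩, rfl⟩ <;>
                · intro h
                  simp only at h
                  subst h
                  tauto


def QPred (G : SimpleGraph V) (f : ZMod 4 → V) : Prop :=
  (∀ i, G.Adj (f i) (f (i + 1))) ∧ (∀ i, f i ≠ f (i + 2))

def QFun (G : SimpleGraph V) := {f : ZMod 4 → V // QPred G f}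

theorem QPred.rot {f : ZMod 4 → V} (h : QPred G f) (i : ZMod 4) :
    QPred G (fun j => f (j + i)) := by
  refine ⟨fun j => ?_, fun j => ?_⟩
  · have := h.1 (j + i); rwa [show j + i + 1 = j + 1 + i by ring] at this
  · have := h.2 (j + i); rwa [show j + i + 2 = j + 2 + i by ring] at this

theorem QPred.refl {f : ZMod 4 → V} (h : QPred G f) (i : ZMod 4) :
    QPred G (fun j => f (i - j)) := by
  refine ⟨fun j => ?_, fun j => ?_⟩
  · have := (h.1 (i - j - 1)).symm
    rwa [show i - j - 1 + 1 = i - j by ring, show i - j - 1 = i - (j + 1) by ring] at this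
  · have := (h.2 (i - j - 2)).symm
    rwa [show i - j - 2 + 2 = i - j by ring, show i - j - 2 = i - (j + 2) by ring] at this

instance : SMul (DihedralGroup 4) (QFun G) where
  smul g f := match g with
    | r i => ⟨fun j => f.1 (j + i), f.2.rot i⟩
    | sr i => ⟨fun j => f.1 (i - j), f.2.refl i⟩

theorem qfun_smul_r (i : ZMod 4) (f : QFun G) (j : ZMod 4) :
    ((r i • f : QFun G)).1 j = f.1 (j + i) := rfl

theorem qfun_smul_sr (i : ZMod 4) (f : QFun G) (j : ZMod 4) :
    ((sr i • f : QFun G)).1 j = f.1 (i - j) := rfl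

instance : MulAction (DihedralGroup 4) (QFun G) where
  one_smul f := by
    show r 0 • f = f
    apply Subtype.ext; funext j; rw [qfun_smul_r]; ring_nf
  mul_smul g h f := by
    apply Subtype.ext; funext j
    rcases g with i | i <;> rcases h with k | k <;>
      simp only [r_mul_r, r_mul_sr, sr_mul_r, sr_mul_sr, qfun_smul_r, qfun_smul_sr] <;>
      first | rfl | (congr 1; ring)

theorem qfun_inj (f : QFun G) : Function.Injective f.1 := by
  intro i j h
  by_contra hne
  have key : ∀ d : ZMod 4, d ≠ 0 → d = 1 ∨ d = 2 ∨ d = 3 := by decide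
  have hd := key (j - i) (fun hh => hne (sub_eq_zero.mp hh).symm)
  have hj : j = i + (j - i) := by ring
  rcases hd with hd | hd | hd <;> rw [hd] at hj <;> subst hj
  · exact (f.2.1 i).ne h
  · exact f.2.2 i h
  · have := (f.2.1 (i + 3)).ne'
    rw [show i + 3 + 1 = i by ring_nf; simp [show (4:ZMod 4) = 0 from by decide]] at this
    exact this h

theorem qfun_stab (f : QFun G) : MulAction.stabilizer (DihedralGroup 4) f = ⊥ := by
  ext g
  simp only [MulAction.mem_stabilizer_iff, Subgroup.mem_bot]
  constructor
  · rcases g with i | i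
    · intro h
      have h0 := congrArg (fun t : QFun G => t.1 0) h
      simp only [qfun_smul_r] at h0
      have : (0 : ZMod 4) + i = 0 := qfun_inj f h0
      rw [one_def]
      simp at this
      rw [this]
    · intro h
      have h0 := congrArg (fun t : QFun G => t.1 0) h
      have h1 := congrArg (fun t : QFun G => t.1 1) h
      simp only [qfun_smul_sr] at h0 h1
      have e0 : i - 0 = 0 := qfun_inj f h0
      have e1 : i - 1 = 1 := qfun_inj f h1
      simp at e0
      subst e0
      exact absurd e1 (by decide)
  · rintro rfl; exact one_smul _ f

theorem eight_dvd_card_qfun [Fintype V] : 8 ∣ Nat.card (QFun G) := by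
  classical
  letI : Fintype (QFun G) := Subtype.fintype _
  have hcf := MulAction.card_eq_sum_card_group_div_card_stabilizer (DihedralGroup 4) (QFun G)
  rw [Nat.card_eq_fintype_card, hcf]
  apply Finset.dvd_sum
  intro ω _
  have h1 : Fintype.card (MulAction.stabilizer (DihedralGroup 4) ω.out) = 1 := by
    rw [← Nat.card_eq_fintype_card, qfun_stab, Subgroup.card_bot]
  rw [h1, DihedralGroup.card]

theorem card_quad_eq_card_qfun :
    Nat.card {q : V × V × V × V // IsQuad G q} = Nat.card (QFun G) := by
  have key4 : ∀ i : ZMod 4, i = 0 ∨ i = 1 ∨ i = 2 ∨ i = 3 := by decide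
  apply (Nat.card_eq_of_bijective (fun f : QFun G =>
    (⟨(f.1 0, f.1 1, f.1 2, f.1 3), f.2.1 0, f.2.1 1, f.2.1 2,
      by have := f.2.1 3; rwa [show (3:ZMod 4) + 1 = 0 by decide] at this,
      f.2.2 0,
      by have := f.2.2 1; rwa [show (1:ZMod 4) + 2 = 3 by decide] at this⟩ :
        {q : V × V × V × V // IsQuad G q})) ⟨?_, ?_⟩).symm
  · intro f f' h
    simp only [Subtype.ext_iff, Prod.mk.injEq] at h
    apply Subtype.ext; funext i
    rcases key4 i with rfl | rfl | rfl | rfl <;> tauto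
  · rintro ⟨⟨a, b, c, d⟩, h1, h2, h3, h4, h5, h6⟩
    classical
    refine ⟨⟨fun i => if i = 0 then a else if i = 1 then b else if i = 2 then c else d,
      ?_, ?_⟩, ?_⟩
    · intro i
      rcases key4 i with rfl | rfl | rfl | rfl <;>
        simp (config := { decide := true }) <;> assumption
    · intro i
      rcases key4 i with rfl | rfl | rfl | rfl <;>
        simp (config := { decide := true }) <;>
        first | assumption | (intro hh; first | exact h5 hh.symm | exact h6 hh.symm)
    · simp (config := { decide := true })

end NoFintype

section WithFintype
variable {V : Type*} [Fintype V] [DecidableEq V] {G : SimpleGraph V} [DecidableRel G.Adj]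


theorem spannedEdges_triple {a b c : V} (hab : a ≠ b) (hac : a ≠ c) (hbc : b ≠ c) :
    spannedEdges G {a,b,c} = (if G.Adj a b then 1 else 0) + (if G.Adj a c then 1 else 0)
      + (if G.Adj b c then 1 else 0) := by
  classical
  rw [spannedEdges, Nat.card_eq_fintype_card, Fintype.card_subtype]
  have hT : (Finset.univ.filter fun e : Sym2 V =>
      e ∈ G.edgeSet ∧ ∀ v ∈ e, v ∈ ({a,b,c} : Finset V)) =
      ({s(a,b), s(a,c), s(b,c)} : Finset (Sym2 V)).filter (· ∈ G.edgeSet) := by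
    ext e
    induction e with
    | _ u v =>
      simp only [Finset.mem_filter, Finset.mem_univ, true_and, Finset.mem_insert,
        Finset.mem_singleton, Sym2.mem_iff, mem_edgeSet, Sym2.eq_iff]
      constructor
      · rintro ⟨h, hm⟩
        have hu := hm u (by simp)
        have hv := hm v (by simp)
        refine ⟨?_, h⟩
        have := h.ne
        rcases hu with rfl|rfl|rfl <;> rcases hv with rfl|rfl|rfl <;> tauto
      · rintro ⟨h, he⟩
        refine ⟨he, ?_⟩
        intro w hw
        rcases h with (⟨h1,h2⟩|⟨h1,h2⟩)|(⟨h1,h2⟩|⟨h1,h2⟩)|(⟨h1,h2⟩|⟨h1,h2⟩) <;>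
          rcases hw with rfl|rfl <;> subst h1 <;> subst h2 <;> simp
  rw [hT]
  have d1 : (s(a,b) : Sym2 V) ≠ s(a,c) := by simp [Sym2.eq_iff]; tauto
  have d2 : (s(a,b) : Sym2 V) ≠ s(b,c) := by simp [Sym2.eq_iff]; tauto
  have d3 : (s(a,c) : Sym2 V) ≠ s(b,c) := by simp [Sym2.eq_iff]; tauto
  rw [Finset.filter_insert, Finset.filter_insert, Finset.filter_singleton]
  split_ifs <;>
    simp_all [Finset.card_insert_of_notMem, Finset.mem_insert, Finset.mem_filter]

theorem card3 {a b c : V} (h1 : a ≠ b) (h2 : a ≠ c) (h3 : b ≠ c) :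
    ({a,b,c} : Finset V).card = 3 := by
  rw [Finset.card_insert_of_notMem (by simp [h1, h2]),
    Finset.card_insert_of_notMem (by simp [h3]), Finset.card_singleton]

abbrev TriT (G : SimpleGraph V) (x : V) :=
  {s : Finset V // G.IsNClique 3 s ∧ ∀ v ∈ s, G.Adj x v}

abbrev PathT (G : SimpleGraph V) (x : V) :=
  {s : Finset V // s.card = 3 ∧ (∀ v ∈ s, G.Adj x v) ∧ spannedEdges G s = 2}

abbrev YT (G : SimpleGraph V) := ((x : V) × TriT G x) ⊕ ((x : V) × PathT G x)

instance : DecidablePred (IsQuad G) := fun q => by unfold IsQuad; infer_instance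

def decode (G : SimpleGraph V) [DecidableRel G.Adj] : V × V × V × V → Option (YT G)
  | (a, b, c, d) =>
    if h : IsQuad G (a, b, c, d) then
      if h2 : G.Adj a c ∧ G.Adj b d then
        some (.inl ⟨a, ⟨{b, c, d}, by
          refine ⟨is3Clique_triple_iff.mpr ⟨h.2.1, h2.2, h.2.2.1⟩, ?_⟩
          intro v hv
          rcases Finset.mem_insert.mp hv with rfl | hv
          · exact h.1
          rcases Finset.mem_insert.mp hv with rfl | hv
          · exact h2.1
          rw [Finset.mem_singleton] at hv; subst hv
          exact h.2.2.2.1.symm⟩⟩)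
      else if h3 : G.Adj a c then
        some (.inr ⟨a, ⟨{b, c, d}, by
          have hbd : ¬ G.Adj b d := fun hh => h2 ⟨h3, hh⟩
          refine ⟨card3 h.2.1.ne h.2.2.2.2.2 h.2.2.1.ne, ?_, ?_⟩
          · intro v hv
            rcases Finset.mem_insert.mp hv with rfl | hv
            · exact h.1
            rcases Finset.mem_insert.mp hv with rfl | hv
            · exact h3
            rw [Finset.mem_singleton] at hv; subst hv
            exact h.2.2.2.1.symm
          · rw [spannedEdges_triple h.2.1.ne h.2.2.2.2.2 h.2.2.1.ne,
              if_pos h.2.1, if_neg hbd, if_pos h.2.2.1]⟩⟩)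
      else if h4 : G.Adj b d then
        some (.inr ⟨d, ⟨{a, b, c}, by
          refine ⟨card3 h.1.ne h.2.2.2.2.1 h.2.1.ne, ?_, ?_⟩
          · intro v hv
            rcases Finset.mem_insert.mp hv with rfl | hv
            · exact h.2.2.2.1
            rcases Finset.mem_insert.mp hv with rfl | hv
            · exact h4.symm
            rw [Finset.mem_singleton] at hv; subst hv
            exact h.2.2.1.symm
          · rw [spannedEdges_triple h.1.ne h.2.2.2.2.1 h.2.1.ne,
              if_pos h.1, if_neg h3, if_pos h.2.1]⟩⟩)
      else none
    else none

theorem decode_isQuad {q : V × V × V × V} {y : YT G} (h : decode G q = some y) :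
    IsQuad G q := by
  obtain ⟨a, b, c, d⟩ := q
  by_contra hq
  rw [decode, dif_neg hq] at h
  exact absurd h (by simp)

theorem decode_tri {a b c d : V} (hab : G.Adj a b) (hac : G.Adj a c) (had : G.Adj a d)
    (hbc : G.Adj b c) (hbd : G.Adj b d) (hcd : G.Adj c d) (pf) :
    decode G (a,b,c,d) = some (.inl ⟨a, ⟨{b,c,d}, pf⟩⟩) := by
  rw [decode, dif_pos ⟨hab, hbc, hcd, had.symm, hac.ne, hbd.ne⟩, dif_pos ⟨hac, hbd⟩]

theorem decode_path1 {x u m v : V} (hxu : G.Adj x u) (hxm : G.Adj x m) (hxv : G.Adj x v)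
    (hum : G.Adj u m) (hmv : G.Adj m v) (huv : ¬G.Adj u v) (hne : u ≠ v) (pf) :
    decode G (x,u,m,v) = some (.inr ⟨x, ⟨{u,m,v}, pf⟩⟩) := by
  rw [decode, dif_pos ⟨hxu, hum, hmv, hxv.symm, hxm.ne, hne⟩,
    dif_neg (fun hh => huv hh.2), dif_pos hxm]

theorem decode_path2 {x u m v : V} (hxu : G.Adj x u) (hxm : G.Adj x m) (hxv : G.Adj x v)
    (hum : G.Adj u m) (hmv : G.Adj m v) (huv : ¬G.Adj u v) (hne : u ≠ v) (pf) :
    decode G (u,m,v,x) = some (.inr ⟨x, ⟨{u,m,v}, pf⟩⟩) := by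
  rw [decode, dif_pos ⟨hum, hmv, hxv.symm, hxu, hne, hxm.ne'⟩,
    dif_neg (fun hh => huv hh.1), dif_neg huv, dif_pos hxm.symm]

theorem path_struct {x : V} (s : PathT G x) : ∃ u m v, u ≠ m ∧ m ≠ v ∧ u ≠ v ∧
    s.1 = {u,m,v} ∧ G.Adj u m ∧ G.Adj m v ∧ ¬G.Adj u v := by
  obtain ⟨s, hcard, hadj, hsp⟩ := s
  obtain ⟨p, q, r, hpq, hpr, hqr, rfl⟩ := Finset.card_eq_three.mp hcard
  rw [spannedEdges_triple hpq hpr hqr] at hsp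
  by_cases h1 : G.Adj p q <;> by_cases h2 : G.Adj p r <;> by_cases h3 : G.Adj q r <;>
    simp only [h1, h2, h3, if_true, if_false] at hsp <;> first
  | omega
  | (exact ⟨q, p, r, hpq.symm, hpr, hqr, by ext w; simp; tauto, h1.symm, h2, h3⟩)
  | (exact ⟨p, q, r, hpq, hqr, hpr, rfl, h1, h3, h2⟩)
  | (exact ⟨p, r, q, hpr, fun hh => hqr hh.symm, hpq, by ext w; simp; tauto, h2, h3.symm, h1⟩)

theorem six_le_fiber (x : V) (s : TriT G x) :
    6 ≤ (Finset.univ.filter fun q : V×V×V×V =>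
      decode G q = some (.inl ⟨x, s⟩)).card := by
  obtain ⟨sval, hsprop⟩ := s
  obtain ⟨b, c, d, hbc', hbd', hcd', rfl⟩ := Finset.card_eq_three.mp hsprop.1.2
  have hcl := hsprop.1.1
  have hbc : G.Adj b c := hcl (by simp) (by simp) hbc'
  have hbd : G.Adj b d := hcl (by simp) (by simp) hbd'
  have hcd : G.Adj c d := hcl (by simp) (by simp) hcd'
  have hxb : G.Adj x b := hsprop.2 b (by simp)
  have hxc : G.Adj x c := hsprop.2 c (by simp)
  have hxd : G.Adj x d := hsprop.2 d (by simp)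
  set L : List (V×V×V×V) :=
    [(x,b,c,d),(x,b,d,c),(x,c,b,d),(x,c,d,b),(x,d,b,c),(x,d,c,b)] with hL
  have hnd : L.Nodup := by
    have := hxb.ne; have := hxc.ne; have := hxd.ne
    simp [hL, Prod.ext_iff]
    tauto
  have hsub : L.toFinset ⊆ Finset.univ.filter fun q : V×V×V×V =>
      decode G q = some (.inl ⟨x, ⟨{b,c,d}, hsprop⟩⟩) := by
    intro q hq
    rw [Finset.mem_filter]
    refine ⟨Finset.mem_univ _, ?_⟩
    simp only [hL, List.mem_toFinset, List.mem_cons, List.not_mem_nil, or_false] at hq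
    have key : ∀ p q r : V, ({p,q,r} : Finset V) = {b,c,d} →
        ∀ (h1 : G.Adj x p) (h2 : G.Adj x q) (h3 : G.Adj x r) (h4 : G.Adj p q)
          (h5 : G.Adj p r) (h6 : G.Adj q r), decode G (x,p,q,r) = some (.inl ⟨x, ⟨{b,c,d}, hsprop⟩⟩) := by
      intro p q r hset h1 h2 h3 h4 h5 h6
      rw [decode_tri h1 h2 h3 h4 h5 h6 (hset ▸ hsprop)]
      exact congrArg (fun t : TriT G x => (some (Sum.inl ⟨x, t⟩) : Option (YT G))) (Subtype.ext hset)
    rcases hq with rfl|rfl|rfl|rfl|rfl|rfl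
    · exact key b c d rfl hxb hxc hxd hbc hbd hcd
    · exact key b d c (by ext w; simp; tauto) hxb hxd hxc hbd hbc hcd.symm
    · exact key c b d (by ext w; simp; tauto) hxc hxb hxd hbc.symm hcd hbd
    · exact key c d b (by ext w; simp; tauto) hxc hxd hxb hcd hbc.symm hbd.symm
    · exact key d b c (by ext w; simp; tauto) hxd hxb hxc hbd.symm hcd.symm hbc
    · exact key d c b (by ext w; simp; tauto) hxd hxc hxb hcd.symm hbd.symm hbc.symm
  calc 6 = L.toFinset.card := by rw [List.toFinset_card_of_nodup hnd]; rfl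
  _ ≤ _ := Finset.card_le_card hsub

theorem four_le_fiber (x : V) (s : PathT G x) :
    4 ≤ (Finset.univ.filter fun q : V×V×V×V =>
      decode G q = some (.inr ⟨x, s⟩)).card := by
  obtain ⟨u, m, v, hum', hmv', huv', hs, hum, hmv, huv⟩ := path_struct s
  obtain ⟨sval, hsprop⟩ := s
  simp only at hs
  subst hs
  have hxu : G.Adj x u := hsprop.2.1 u (by simp)
  have hxm : G.Adj x m := hsprop.2.1 m (by simp)
  have hxv : G.Adj x v := hsprop.2.1 v (by simp)
  set L : List (V×V×V×V) := [(x,u,m,v),(x,v,m,u),(u,m,v,x),(v,m,u,x)] with hL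
  have hnd : L.Nodup := by
    have := hxu.ne; have := hxv.ne
    simp [hL, Prod.ext_iff]
    tauto
  have hsub : L.toFinset ⊆ Finset.univ.filter fun q : V×V×V×V =>
      decode G q = some (.inr ⟨x, ⟨{u,m,v}, hsprop⟩⟩) := by
    intro q hq
    rw [Finset.mem_filter]
    refine ⟨Finset.mem_univ _, ?_⟩
    simp only [hL, List.mem_toFinset, List.mem_cons, List.not_mem_nil, or_false] at hq
    have hset : ({v,m,u} : Finset V) = {u,m,v} := by ext w; simp; tauto
    rcases hq with rfl|rfl|rfl|rfl
    · exact decode_path1 hxu hxm hxv hum hmv huv huv' hsprop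
    · rw [decode_path1 hxv hxm hxu hmv.symm hum.symm (fun hh => huv hh.symm)
        (Ne.symm huv') (hset ▸ hsprop)]
      exact congrArg (fun t : PathT G x => (some (Sum.inr ⟨x, t⟩) : Option (YT G))) (Subtype.ext hset)
    · exact decode_path2 hxu hxm hxv hum hmv huv huv' hsprop
    · rw [decode_path2 hxv hxm hxu hmv.symm hum.symm (fun hh => huv hh.symm)
        (Ne.symm huv') (hset ▸ hsprop)]
      exact congrArg (fun t : PathT G x => (some (Sum.inr ⟨x, t⟩) : Option (YT G))) (Subtype.ext hset)
  calc 4 = L.toFinset.card := by rw [List.toFinset_card_of_nodup hnd]; rfl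
  _ ≤ _ := Finset.card_le_card hsub

theorem count_le :
    ∑ x : V, (6 * Nat.card (TriT G x) + 4 * Nat.card (PathT G x))
      ≤ Nat.card {q : V×V×V×V // IsQuad G q} := by
  classical
  set fib : YT G → Finset (V×V×V×V) :=
    fun y => Finset.univ.filter fun q => decode G q = some y with hfib
  have hw : ∀ y : YT G, Sum.elim (fun _ => 6) (fun _ => 4) y ≤ (fib y).card := by
    rintro (⟨x, s⟩ | ⟨x, s⟩)
    · exact six_le_fiber x s
    · exact four_le_fiber x s
  have hdisj : ∀ y ∈ (Finset.univ : Finset (YT G)), ∀ z ∈ Finset.univ, y ≠ z →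
      Disjoint (fib y) (fib z) := by
    intro y _ z _ hyz
    rw [Finset.disjoint_left]
    intro q hq hq'
    rw [hfib, Finset.mem_filter] at hq hq'
    exact hyz (Option.some_injective _ (hq.2.symm.trans hq'.2))
  have hsub : Finset.univ.biUnion fib ⊆ Finset.univ.filter (IsQuad G ·) := by
    intro q hq
    rw [Finset.mem_biUnion] at hq
    obtain ⟨y, _, hy⟩ := hq
    rw [hfib, Finset.mem_filter] at hy
    exact Finset.mem_filter.mpr ⟨Finset.mem_univ _, decode_isQuad hy.2⟩
  have key : ∑ y : YT G, Sum.elim (fun _ => 6) (fun _ => 4) y ≤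
      (Finset.univ.filter (IsQuad G ·)).card := by
    calc ∑ y : YT G, Sum.elim (fun _ => 6) (fun _ => 4) y
        ≤ ∑ y : YT G, (fib y).card := Finset.sum_le_sum fun y _ => hw y
      _ = (Finset.univ.biUnion fib).card := (Finset.card_biUnion hdisj).symm
      _ ≤ _ := Finset.card_le_card hsub
  have hY : ∑ y : YT G, Sum.elim (fun _ => 6) (fun _ => 4) y =
      ∑ x : V, (6 * Nat.card (TriT G x) + 4 * Nat.card (PathT G x)) := by
    rw [Fintype.sum_sum_type]
    simp only [Sum.elim_inl, Sum.elim_inr, Finset.sum_const, Finset.card_univ, smul_eq_mul]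
    rw [Finset.sum_add_distrib, ← Finset.mul_sum, ← Finset.mul_sum]
    simp only [Nat.card_eq_fintype_card]
    rw [← Fintype.card_sigma, ← Fintype.card_sigma, mul_comm, mul_comm (Fintype.card _) 4]
  rw [← hY, Nat.card_eq_fintype_card, Fintype.card_subtype]
  exact key

end WithFintype

end C4CountAux

open C4CountAux in
/-- For every finite simple graph `G`: summing over all vertices `x` three times the number of
triangles inside the neighborhood of `x` plus twice the number of 3-subsets of the neighborhood
of `x` spanning exactly two edges is at most `4·c₄(G)`. -/
theorem sum_cherries_le_four_c4 {V : Type*} [Fintype V] (G : SimpleGraph V) :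
    ∑ x : V, (3 * Nat.card {s : Finset V // G.IsNClique 3 s ∧ ∀ v ∈ s, G.Adj x v}
        + 2 * Nat.card {s : Finset V //
            s.card = 3 ∧ (∀ v ∈ s, G.Adj x v) ∧ spannedEdges G s = 2})
      ≤ 4 * cycleCount G 4 := by
  classical
  letI : DecidableRel G.Adj := Classical.decRel _
  have h1 : Nat.card {q : V × V × V × V // IsQuad G q} =
      Nat.card ((x : V) × {p : G.Walk x x // p.IsCycle ∧ p.length = 4}) :=
    Nat.card_eq_of_bijective _ quadToWalk_bijective
  have h2 : (8 : ℕ) ∣ Nat.card {q : V × V × V × V // IsQuad G q} := by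
    rw [card_quad_eq_card_qfun]
    exact eight_dvd_card_qfun
  have h3 := count_le (G := G)
  obtain ⟨mlt, hm⟩ := h2
  have hc : cycleCount G 4 = mlt := by
    rw [cycleCount, ← h1, hm]
    omega
  have hsum : ∑ x : V, (6 * Nat.card (TriT G x) + 4 * Nat.card (PathT G x)) =
      2 * ∑ x : V, (3 * Nat.card (TriT G x) + 2 * Nat.card (PathT G x)) := by
    rw [Finset.mul_sum]
    congr 1
    funext x
    ring
  rw [hsum, hm] at h3
  have : ∑ x : V, (3 * Nat.card (TriT G x) + 2 * Nat.card (PathT G x)) ≤ 4 * mlt := by omega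
  rw [hc]
  exact this
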